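/- For every natural number n, Σ_{k=0}^{a(n)} a(k) = a(n)² + 2·a(n) − n, where a enumerates the odious numbers in increasing order. -/

import Mathlib

/-- Sum of base-`d` digits of `n`. -/
def sdig (d n : ℕ) : ℕ := (Nat.digits d n).sum

/-- `t_d(n)`: base-`d` digit sum of `n`, reduced mod `d`. -/
def td (d n : ℕ) : ℕ := sdig d n % d

/-- `a_{j,d}(n)`: n-th natural (0-indexed, increasing) with base-`d` digit sum ≡ j mod d. -/
noncomputable def agen (d j n : ℕ) : ℕ := Nat.nth (fun k => sdig d k % d = j) n

/-- n-th odious number (binary digit sum odd), 0-indexed increasing. -/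
noncomputable def odious (n : ℕ) : ℕ := Nat.nth (fun k => (Nat.digits 2 k).sum % 2 = 1) n

/-- n-th evil number (binary digit sum even), 0-indexed increasing. -/
noncomputable def evil (n : ℕ) : ℕ := Nat.nth (fun k => (Nat.digits 2 k).sum % 2 = 0) n

/-- Thue–Morse sequence: parity of the binary digit sum. -/
def tm (n : ℕ) : ℕ := (Nat.digits 2 n).sum % 2

namespace Aux13

abbrev p : ℕ → Prop := fun k => (Nat.digits 2 k).sum % 2 = 1

lemma tm_le_one (n : ℕ) : tm n ≤ 1 := Nat.lt_succ_iff.mp (Nat.mod_lt _ (by norm_num))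

lemma tm_two_mul (k : ℕ) : tm (2 * k) = tm k := by
  rcases Nat.eq_zero_or_pos k with h | h
  · simp [h]
  · unfold tm
    rw [Nat.digits_def' (by norm_num : 1 < 2) (by omega)]
    simp [Nat.mul_div_cancel_left _ (by norm_num : 0 < 2), Nat.mul_mod_right]

lemma tm_two_mul_add_one (k : ℕ) : tm (2 * k + 1) = 1 - tm k := by
  unfold tm
  rw [Nat.digits_def' (by norm_num : 1 < 2) (by omega)]
  have h1 : (2 * k + 1) % 2 = 1 := by omega
  have h2 : (2 * k + 1) / 2 = k := by omega
  rw [h1, h2, List.sum_cons]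
  have := Nat.mod_lt (Nat.digits 2 k).sum (show 0 < 2 by norm_num)
  omega

lemma p_iff (k : ℕ) : p k ↔ tm k = 1 := Iff.rfl

lemma count_two_mul (k : ℕ) : Nat.count p (2 * k) = k := by
  induction k with
  | zero => simp
  | succ k ih =>
    have h : 2 * (k + 1) = (2 * k + 1) + 1 := by ring
    rw [h, Nat.count_succ, Nat.count_succ, ih]
    have h1 := tm_two_mul k
    have h2 := tm_two_mul_add_one k
    have h3 := tm_le_one k
    by_cases hk : tm k = 1
    · rw [if_pos (show p (2*k) from by rw [p_iff, h1, hk]),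
        if_neg (show ¬ p (2*k+1) from by rw [p_iff, h2, hk]; omega)]
    · rw [if_neg (show ¬ p (2*k) from by rw [p_iff, h1]; exact hk),
        if_pos (show p (2*k+1) from by rw [p_iff, h2]; omega)]

lemma p_val (k : ℕ) : p (2 * k + 1 - tm k) := by
  have h3 := tm_le_one k
  by_cases hk : tm k = 1
  · have : 2 * k + 1 - tm k = 2 * k := by omega
    rw [this, p_iff, tm_two_mul, hk]
  · have h0 : tm k = 0 := by omega
    have : 2 * k + 1 - tm k = 2 * k + 1 := by omega
    rw [this, p_iff, tm_two_mul_add_one, h0]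

lemma count_val (k : ℕ) : Nat.count p (2 * k + 1 - tm k) = k := by
  have h3 := tm_le_one k
  by_cases hk : tm k = 1
  · have : 2 * k + 1 - tm k = 2 * k := by omega
    rw [this, count_two_mul]
  · have h0 : tm k = 0 := by omega
    have : 2 * k + 1 - tm k = 2 * k + 1 := by omega
    rw [this, Nat.count_succ, count_two_mul,
      if_neg (show ¬ p (2*k) from by rw [p_iff, tm_two_mul]; omega)]
    omega

lemma odious_eq (k : ℕ) : odious k = 2 * k + 1 - tm k := by
  have := Nat.nth_count (p := p) (p_val k)
  rw [count_val] at this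
  exact this

lemma odious_cast (k : ℕ) : (odious k : ℤ) = 2 * k + 1 - tm k := by
  rw [odious_eq]
  have h3 := tm_le_one k
  have h4 : tm k ≤ 2 * k + 1 := by omega
  push_cast [h4]
  ring

lemma sum_tm (N : ℕ) : ∑ k ∈ Finset.range N, tm k = Nat.count p N := by
  induction N with
  | zero => simp
  | succ N ih =>
    rw [Finset.sum_range_succ, ih, Nat.count_succ]
    have h3 := tm_le_one N
    by_cases hN : p N
    · rw [if_pos hN]; have : tm N = 1 := hN; omega
    · rw [if_neg hN]
      have : tm N ≠ 1 := hN
      omega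

lemma sum_odd (N : ℕ) : ∑ k ∈ Finset.range N, ((2 * k + 1 : ℤ)) = (N : ℤ) ^ 2 := by
  induction N with
  | zero => simp
  | succ N ih => rw [Finset.sum_range_succ, ih]; push_cast; ring

end Aux13

theorem stmt13 (n : ℕ) :
    (∑ k ∈ Finset.range (odious n + 1), odious k : ℤ) =
      (odious n : ℤ) ^ 2 + 2 * odious n - n := by
  have hsum : ∀ k ∈ Finset.range (odious n + 1), (odious k : ℤ) = 2 * k + 1 - tm k :=
    fun k _ => Aux13.odious_cast k
  rw [Finset.sum_congr rfl hsum, Finset.sum_sub_distrib, Aux13.sum_odd]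
  have hpm : Aux13.p (odious n) := by rw [Aux13.odious_eq]; exact Aux13.p_val n
  have hcm : Nat.count Aux13.p (odious n) = n := by
    rw [Aux13.odious_eq]; exact Aux13.count_val n
  have htm : ∑ k ∈ Finset.range (odious n + 1), tm k = n + 1 := by
    rw [Aux13.sum_tm, Nat.count_succ, if_pos hpm, hcm]
  have htm' : ∑ k ∈ Finset.range (odious n + 1), ((tm k : ℤ)) = (n : ℤ) + 1 := by
    rw [← Nat.cast_sum]
    exact_mod_cast htm
  rw [htm']
  push_cast
  ring
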